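/- Let X be a finite set of even cardinality |X| ≥ 4, let M be a uniformly random partition of X into pairs, and let F be any set of 2-element subsets of X. Then for every λ > 0, the probability that | |F ∩ M| − |F|/(|X| − 1) | ≥ λ is at most |X|/λ². -/

import Mathlib

open ProbabilityTheory
set_option linter.unusedSectionVars false

/-- `M` is a partition of the (finite) vertex type `V` into pairs. -/
def IsPerfectPairing {V : Type*} (M : Finset (Finset V)) : Prop :=
  (∀ p ∈ M, p.card = 2) ∧ ∀ v : V, ∃! p, p ∈ M ∧ v ∈ p

section Aux

variable {V : Type*} [Fintype V] [DecidableEq V]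

private lemma pp_unique {M : Finset (Finset V)} (hM : IsPerfectPairing M)
    {p q : Finset V} (hp : p ∈ M) (hq : q ∈ M) {v : V} (hvp : v ∈ p) (hvq : v ∈ q) :
    p = q := by
  obtain ⟨r, -, hr⟩ := hM.2 v
  rw [hr p ⟨hp, hvp⟩, hr q ⟨hq, hvq⟩]

/-- Action of a permutation on a set of blocks. -/
private def act (σ : Equiv.Perm V) (M : Finset (Finset V)) : Finset (Finset V) :=
  M.image (Finset.image σ)

private lemma act_act (σ : Equiv.Perm V) (M : Finset (Finset V)) : act σ⁻¹ (act σ M) = M := by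
  rw [act, act, Finset.image_image]
  have h : M.image (Finset.image ⇑σ⁻¹ ∘ Finset.image ⇑σ) = M.image id := by
    apply Finset.image_congr
    intro s _
    ext x; simp [Function.comp]
  simpa using h

private lemma mem_act {σ : Equiv.Perm V} {M : Finset (Finset V)} {e : Finset V} :
    e.image σ ∈ act σ M ↔ e ∈ M := by
  constructor
  · intro h
    obtain ⟨p, hp, hpe⟩ := Finset.mem_image.1 h
    rwa [← Finset.image_injective σ.injective hpe]
  · intro h; exact Finset.mem_image_of_mem _ h

private lemma act_pp (σ : Equiv.Perm V) {M : Finset (Finset V)} (hM : IsPerfectPairing M) :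
    IsPerfectPairing (act σ M) := by
  constructor
  · intro p hp
    obtain ⟨q, hq, rfl⟩ := Finset.mem_image.1 hp
    rw [Finset.card_image_of_injective _ σ.injective]
    exact hM.1 q hq
  · intro v
    obtain ⟨p, ⟨hpM, hvp⟩, hu⟩ := hM.2 (σ⁻¹ v)
    refine ⟨p.image σ, ⟨Finset.mem_image_of_mem _ hpM, ?_⟩, ?_⟩
    · exact Finset.mem_image.2 ⟨σ⁻¹ v, hvp, by simp⟩
    · rintro q ⟨hqM, hvq⟩
      obtain ⟨r, hrM, rfl⟩ := Finset.mem_image.1 hqM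
      obtain ⟨w, hwr, hw⟩ := Finset.mem_image.1 hvq
      have hww : w = σ⁻¹ v := by simp [← hw]
      subst hww
      rw [hu r ⟨hrM, hwr⟩]



private lemma exists_perm0 {α : Type*} [Fintype α] [DecidableEq α] (s t : Finset α)
    (h : s.card = t.card) : ∃ σ : Equiv.Perm α, s.image σ = t := by
  classical
  have h1 : Fintype.card {x // x ∈ s} = Fintype.card {x // x ∈ t} := by
    simp [Fintype.card_coe, h]
  have h2 : Fintype.card {x // ¬x ∈ s} = Fintype.card {x // ¬x ∈ t} := by
    rw [Fintype.card_subtype_compl, Fintype.card_subtype_compl]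
    simp [Fintype.card_coe, h]
  let e1 := Fintype.equivOfCardEq h1
  let e2 := Fintype.equivOfCardEq h2
  refine ⟨(Equiv.sumCompl (· ∈ s)).symm.trans ((e1.sumCongr e2).trans (Equiv.sumCompl (· ∈ t))), ?_⟩
  apply Finset.eq_of_subset_of_card_le
  · intro y hy
    obtain ⟨x, hx, rfl⟩ := Finset.mem_image.1 hy
    rw [Equiv.trans_apply, Equiv.trans_apply, Equiv.sumCompl_symm_apply_of_pos hx]
    simp only [Equiv.sumCongr_apply, Sum.map_inl, Equiv.sumCompl_apply_inl]
    exact (e1 ⟨x, hx⟩).2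
  · rw [Finset.card_image_of_injective _ (Equiv.injective _), h]

private lemma exists_perm_fix {α : Type*} [Fintype α] [DecidableEq α] (u s t : Finset α)
    (h : s.card = t.card) (hs : Disjoint s u) (ht : Disjoint t u) :
    ∃ σ : Equiv.Perm α, s.image σ = t ∧ ∀ x ∈ u, σ x = x := by
  classical
  have hcard : (s.subtype (· ∉ u)).card = (t.subtype (· ∉ u)).card := by
    rw [Finset.card_subtype, Finset.card_subtype,
      Finset.filter_true_of_mem (fun x hx => Finset.disjoint_left.1 hs hx),
      Finset.filter_true_of_mem (fun x hx => Finset.disjoint_left.1 ht hx), h]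
  obtain ⟨τ, hτ⟩ := exists_perm0 _ _ hcard
  refine ⟨Equiv.Perm.ofSubtype τ, ?_, ?_⟩
  · apply Finset.eq_of_subset_of_card_le
    · intro y hy
      obtain ⟨x, hx, rfl⟩ := Finset.mem_image.1 hy
      have hxp : x ∉ u := fun hxu => Finset.disjoint_left.1 hs hx hxu
      rw [Equiv.Perm.ofSubtype_apply_of_mem τ hxp]
      have h1 : (⟨x, hxp⟩ : {x // x ∉ u}) ∈ s.subtype (· ∉ u) := Finset.mem_subtype.2 hx
      have h2 : τ ⟨x, hxp⟩ ∈ t.subtype (· ∉ u) := hτ ▸ Finset.mem_image_of_mem τ h1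
      exact Finset.mem_subtype.1 h2
    · rw [Finset.card_image_of_injective _ (Equiv.injective _), h]
  · intro x hx
    exact Equiv.Perm.ofSubtype_apply_of_not_mem τ (not_not.2 hx)

open scoped Classical in
/-- The finset of all perfect pairings. -/
private noncomputable def PP (V : Type*) [Fintype V] : Finset (Finset (Finset V)) :=
  Finset.univ.filter (fun M => IsPerfectPairing M)

open scoped Classical in
private noncomputable def cnt1 (e : Finset V) : ℕ :=
  ((PP V).filter (fun M => e ∈ M)).card

open scoped Classical in
private noncomputable def cnt2 (e f : Finset V) : ℕ :=
  ((PP V).filter (fun M => e ∈ M ∧ f ∈ M)).card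

private lemma mem_PP {M : Finset (Finset V)} : M ∈ PP V ↔ IsPerfectPairing M := by
  simp [PP]

private lemma card_filter_act (σ : Equiv.Perm V) (p q : Finset (Finset V) → Prop)
    [DecidablePred p] [DecidablePred q]
    (hpq : ∀ M, IsPerfectPairing M → (p M ↔ q (act σ M))) :
    ((PP V).filter p).card = ((PP V).filter q).card := by
  apply Finset.card_bij' (fun M _ => act σ M) (fun M _ => act σ⁻¹ M)
  · intro M hM
    rw [Finset.mem_filter] at hM ⊢
    obtain ⟨hM1, hM2⟩ := hM
    have hpp := mem_PP.1 hM1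
    exact ⟨mem_PP.2 (act_pp σ hpp), (hpq M hpp).1 hM2⟩
  · intro M hM
    rw [Finset.mem_filter] at hM ⊢
    obtain ⟨hM1, hM2⟩ := hM
    have hpp := mem_PP.1 hM1
    refine ⟨mem_PP.2 (act_pp σ⁻¹ hpp), ?_⟩
    have h2 : act σ (act σ⁻¹ M) = M := by
      have := act_act σ⁻¹ M; rwa [inv_inv] at this
    rw [hpq _ (act_pp σ⁻¹ hpp), h2]
    exact hM2
  · intro M _; exact act_act σ M
  · intro M _
    have := act_act σ⁻¹ M; rwa [inv_inv] at this

private lemma cnt1_act (σ : Equiv.Perm V) (e : Finset V) : cnt1 (e.image σ) = cnt1 e := by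
  classical
  rw [cnt1, cnt1]
  exact (card_filter_act σ (fun M => e ∈ M) (fun M => e.image σ ∈ M)
    (fun M _ => Iff.symm mem_act)).symm

private lemma cnt2_act (σ : Equiv.Perm V) (e f : Finset V) :
    cnt2 (e.image σ) (f.image σ) = cnt2 e f := by
  classical
  rw [cnt2, cnt2]
  exact (card_filter_act σ (fun M => e ∈ M ∧ f ∈ M)
    (fun M => e.image σ ∈ M ∧ f.image σ ∈ M)
    (fun M _ => by rw [mem_act, mem_act])).symm

private lemma sum_cnt1 (v : V) :
    ∑ e ∈ Finset.univ.filter (fun e : Finset V => e.card = 2 ∧ v ∈ e), cnt1 e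
      = (PP V).card := by
  classical
  have h : ∀ e : Finset V, cnt1 e = ∑ M ∈ PP V, if e ∈ M then 1 else 0 := by
    intro e; rw [cnt1, Finset.card_filter]
  simp_rw [h]
  rw [Finset.sum_comm]
  have h2 : ∀ M ∈ PP V,
      (∑ e ∈ Finset.univ.filter (fun e : Finset V => e.card = 2 ∧ v ∈ e),
        if e ∈ M then 1 else 0) = 1 := by
    intro M hM
    have hpp := mem_PP.1 hM
    rw [← Finset.card_filter]
    obtain ⟨p, ⟨hpM, hvp⟩, hu⟩ := hpp.2 v
    rw [Finset.card_eq_one]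
    refine ⟨p, ?_⟩
    ext e
    simp only [Finset.mem_filter, Finset.mem_univ, true_and, Finset.mem_singleton]
    constructor
    · rintro ⟨⟨hc, hv⟩, hM'⟩; exact hu e ⟨hM', hv⟩
    · rintro rfl; exact ⟨⟨hpp.1 _ hpM, hvp⟩, hpM⟩
  rw [Finset.sum_congr rfl h2, Finset.sum_const, smul_eq_mul, mul_one]

private lemma sum_cnt2 (e₀ : Finset V) (v : V) (hv : v ∉ e₀) :
    ∑ f ∈ Finset.univ.filter (fun f : Finset V => f.card = 2 ∧ v ∈ f ∧ Disjoint f e₀),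
      cnt2 e₀ f = cnt1 e₀ := by
  classical
  have h : ∀ f : Finset V, cnt2 e₀ f = ∑ M ∈ PP V, if e₀ ∈ M ∧ f ∈ M then 1 else 0 := by
    intro f; rw [cnt2, Finset.card_filter]
  simp_rw [h]
  rw [Finset.sum_comm, cnt1, Finset.card_filter]
  apply Finset.sum_congr rfl
  intro M hM
  have hpp := mem_PP.1 hM
  by_cases he₀ : e₀ ∈ M
  · simp only [he₀, true_and, if_true]
    rw [← Finset.card_filter]
    obtain ⟨p, ⟨hpM, hvp⟩, hu⟩ := hpp.2 v
    have hpe : Disjoint p e₀ := by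
      rw [Finset.disjoint_left]
      intro x hxp hxe
      exact hv (pp_unique hpp hpM he₀ hxp hxe ▸ hvp)
    rw [Finset.card_eq_one]
    refine ⟨p, ?_⟩
    ext f
    simp only [Finset.mem_filter, Finset.mem_univ, true_and, Finset.mem_singleton]
    constructor
    · rintro ⟨⟨hc, hvf, hdf⟩, hfM⟩; exact hu f ⟨hfM, hvf⟩
    · rintro rfl; exact ⟨⟨hpp.1 _ hpM, hvp, hpe⟩, hpM⟩
  · simp [he₀]

private lemma card_Ev (v : V) :
    (Finset.univ.filter (fun e : Finset V => e.card = 2 ∧ v ∈ e)).card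
      = Fintype.card V - 1 := by
  classical
  have himg : Finset.univ.filter (fun e : Finset V => e.card = 2 ∧ v ∈ e)
      = (Finset.univ.erase v).image (fun w => ({v, w} : Finset V)) := by
    ext e
    simp only [Finset.mem_filter, Finset.mem_univ, true_and, Finset.mem_image,
      Finset.mem_erase]
    constructor
    · rintro ⟨hc, hv⟩
      obtain ⟨a, b, hab, rfl⟩ := Finset.card_eq_two.1 hc
      rcases Finset.mem_insert.1 hv with rfl | hb
      · exact ⟨b, ⟨hab.symm, trivial⟩, rfl⟩
      · rcases Finset.mem_singleton.1 hb with rfl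
        exact ⟨a, ⟨hab, trivial⟩, (Finset.pair_comm a v).symm⟩
    · rintro ⟨w, ⟨hwv, -⟩, rfl⟩
      exact ⟨Finset.card_pair (Ne.symm hwv), Finset.mem_insert_self v _⟩
  rw [himg, Finset.card_image_of_injOn, Finset.card_erase_of_mem (Finset.mem_univ v),
    Finset.card_univ]
  intro w hw w' hw' h
  have hwv : w ≠ v := (Finset.mem_erase.1 hw).1
  have hh : ({v, w} : Finset V) = {v, w'} := h
  have : w ∈ ({v, w'} : Finset V) := by
    rw [← hh]; exact Finset.mem_insert_of_mem (Finset.mem_singleton_self w)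
  rcases Finset.mem_insert.1 this with rfl | h'
  · exact absurd rfl hwv
  · exact Finset.mem_singleton.1 h'

private lemma card_Eve (e₀ : Finset V) (he₀ : e₀.card = 2) (v : V) (hv : v ∉ e₀) :
    (Finset.univ.filter (fun f : Finset V => f.card = 2 ∧ v ∈ f ∧ Disjoint f e₀)).card
      = Fintype.card V - 3 := by
  classical
  have himg : Finset.univ.filter (fun f : Finset V => f.card = 2 ∧ v ∈ f ∧ Disjoint f e₀)
      = (Finset.univ \ insert v e₀).image (fun w => ({v, w} : Finset V)) := by
    ext f
    simp only [Finset.mem_filter, Finset.mem_univ, true_and, Finset.mem_image,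
      Finset.mem_sdiff, Finset.mem_insert]
    constructor
    · rintro ⟨hc, hvf, hdf⟩
      obtain ⟨a, b, hab, rfl⟩ := Finset.card_eq_two.1 hc
      have hnd : ∀ x ∈ ({a, b} : Finset V), x ∉ e₀ := fun x hx => Finset.disjoint_left.1 hdf hx
      rcases Finset.mem_insert.1 hvf with rfl | hb
      · refine ⟨b, ?_, rfl⟩
        exact fun hor => hor.elim (fun h1 => hab h1.symm)
          (fun h2 => hnd b (Finset.mem_insert_of_mem (Finset.mem_singleton_self b)) h2)
      · rcases Finset.mem_singleton.1 hb with rfl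
        refine ⟨a, ?_, (Finset.pair_comm a v).symm⟩
        exact fun hor => hor.elim (fun h1 => hab h1)
          (fun h2 => hnd a (Finset.mem_insert_self a _) h2)
    · rintro ⟨w, hw, rfl⟩
      have hwv : w ≠ v := fun h => hw (Or.inl h)
      have hwe : w ∉ e₀ := fun h => hw (Or.inr h)
      refine ⟨Finset.card_pair (Ne.symm hwv), Finset.mem_insert_self v _, ?_⟩
      rw [Finset.disjoint_left]
      intro x hx
      rcases Finset.mem_insert.1 hx with rfl | hx'
      · exact hv
      · rcases Finset.mem_singleton.1 hx' with rfl
        exact hwe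
  rw [himg, Finset.card_image_of_injOn, Finset.card_sdiff_of_subset (Finset.subset_univ _),
    Finset.card_univ, Finset.card_insert_of_notMem hv, he₀]
  · intro w hw w' hw' h
    have hwv : w ≠ v := by
      intro h'
      exact (Finset.mem_sdiff.1 hw).2 (h' ▸ Finset.mem_insert_self v e₀)
    have hh : ({v, w} : Finset V) = {v, w'} := h
    have : w ∈ ({v, w'} : Finset V) := by
      rw [← hh]; exact Finset.mem_insert_of_mem (Finset.mem_singleton_self w)
    rcases Finset.mem_insert.1 this with rfl | h'
    · exact absurd rfl hwv
    · exact Finset.mem_singleton.1 h'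

private lemma cnt1_mul (hn : 4 ≤ Fintype.card V) (e : Finset V) (he : e.card = 2) :
    cnt1 e * (Fintype.card V - 1) = (PP V).card := by
  classical
  have hne : Nonempty V := Fintype.card_pos_iff.1 (by omega)
  obtain ⟨v⟩ := hne
  have h1 : ∑ e' ∈ Finset.univ.filter (fun e' : Finset V => e'.card = 2 ∧ v ∈ e'), cnt1 e'
      = ∑ _e' ∈ Finset.univ.filter (fun e' : Finset V => e'.card = 2 ∧ v ∈ e'), cnt1 e := by
    apply Finset.sum_congr rfl
    intro e' he'
    obtain ⟨hc, -⟩ := (Finset.mem_filter.1 he').2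
    obtain ⟨σ, hσ⟩ := exists_perm0 e e' (he.trans hc.symm)
    rw [← hσ, cnt1_act]
  rw [← sum_cnt1 v, h1, Finset.sum_const, smul_eq_mul, card_Ev, mul_comm]

private lemma cnt2_mul (e f : Finset V) (he : e.card = 2)
    (hf : f.card = 2) (hd : Disjoint f e) :
    cnt2 e f * (Fintype.card V - 3) = cnt1 e := by
  classical
  have hcompl : (eᶜ : Finset V).Nonempty := by
    rw [← Finset.card_pos, Finset.card_compl, he]
    have := Finset.card_le_univ f
    have hcard4 : 2 ≤ Fintype.card V := le_trans (by rw [← he]) (Finset.card_le_univ e)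
    -- we need strictly more; use that f is disjoint from e
    have : (e ∪ f).card ≤ Fintype.card V := Finset.card_le_univ _
    rw [Finset.card_union_of_disjoint hd.symm, he, hf] at this
    omega
  obtain ⟨v, hv⟩ := hcompl
  rw [Finset.mem_compl] at hv
  have h1 : ∀ f' ∈ Finset.univ.filter
      (fun f' : Finset V => f'.card = 2 ∧ v ∈ f' ∧ Disjoint f' e),
      cnt2 e f' = cnt2 e f := by
    intro f' hf'
    obtain ⟨hc, hvf, hdf⟩ := (Finset.mem_filter.1 hf').2
    obtain ⟨σ, hσ1, hσ2⟩ := exists_perm_fix e f f' (hf.trans hc.symm) hd hdf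
    have he' : e.image σ = e := by
      rw [Finset.image_congr (g := id) (fun x hx => hσ2 x hx), Finset.image_id]
    calc cnt2 e f' = cnt2 (e.image σ) (f.image σ) := by rw [he', hσ1]
      _ = cnt2 e f := cnt2_act σ e f
  rw [← sum_cnt2 e v hv, Finset.sum_congr rfl h1, Finset.sum_const, smul_eq_mul,
    card_Eve e he v hv, mul_comm]

private lemma cnt2_self (e : Finset V) : cnt2 e e = cnt1 e := by
  classical
  rw [cnt2, cnt1]
  congr 1
  apply Finset.filter_congr
  intro M _
  simp

private lemma cnt2_zero (e f : Finset V) (hne : e ≠ f) (hnd : ¬ Disjoint e f) :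
    cnt2 e f = 0 := by
  classical
  rw [cnt2, Finset.card_eq_zero, Finset.filter_eq_empty_iff]
  rintro M hM ⟨heM, hfM⟩
  obtain ⟨x, hxe, hxf⟩ := Finset.not_disjoint_iff.1 hnd
  exact hne (pp_unique (mem_PP.1 hM) heM hfM hxe hxf)

private lemma card_inter_eq_sum (s : Finset V) : s.card = ∑ v : V, if v ∈ s then 1 else 0 := by
  classical
  rw [← Finset.card_filter]
  congr 1
  ext v
  simp

private lemma sumS (F : Finset (Finset V)) :
    ∑ M ∈ PP V, (F ∩ M).card = ∑ e ∈ F, cnt1 e := by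
  classical
  have h : ∀ M : Finset (Finset V), (F ∩ M).card = ∑ e ∈ F, if e ∈ M then 1 else 0 := by
    intro M
    rw [← Finset.filter_mem_eq_inter, Finset.card_filter]
  simp_rw [h]
  rw [Finset.sum_comm]
  apply Finset.sum_congr rfl
  intro e _
  rw [cnt1, Finset.card_filter]

private lemma sumS2 (F : Finset (Finset V)) :
    ∑ M ∈ PP V, (F ∩ M).card ^ 2 = ∑ e ∈ F, ∑ f ∈ F, cnt2 e f := by
  classical
  have h : ∀ M : Finset (Finset V), (F ∩ M).card ^ 2
      = ∑ e ∈ F, ∑ f ∈ F, if e ∈ M ∧ f ∈ M then 1 else 0 := by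
    intro M
    rw [← Finset.filter_mem_eq_inter, Finset.card_filter, sq, Finset.sum_mul_sum]
    apply Finset.sum_congr rfl; intro e _
    apply Finset.sum_congr rfl; intro f _
    by_cases h1 : e ∈ M <;> by_cases h2 : f ∈ M <;> simp [h1, h2]
  simp_rw [h]
  rw [Finset.sum_comm]
  apply Finset.sum_congr rfl
  intro e _
  rw [Finset.sum_comm]
  apply Finset.sum_congr rfl
  intro f _
  rw [cnt2, Finset.card_filter]

private lemma sumS2_split (F : Finset (Finset V)) (hF2 : ∀ e ∈ F, e.card = 2) :
    ∑ e ∈ F, ∑ f ∈ F, cnt2 e f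
      = (∑ e ∈ F, cnt1 e)
        + ∑ p ∈ (F ×ˢ F).filter (fun p => Disjoint p.1 p.2), cnt2 p.1 p.2 := by
  classical
  rw [← Finset.sum_product']
  rw [← Finset.sum_filter_add_sum_filter_not (F ×ˢ F) (fun p => Disjoint p.1 p.2)]
  rw [add_comm]
  congr 1
  have h1 : ∀ p ∈ (F ×ˢ F).filter (fun p => ¬Disjoint p.1 p.2),
      cnt2 p.1 p.2 = if p.1 = p.2 then cnt1 p.1 else 0 := by
    intro p hp
    obtain ⟨-, hnd⟩ := Finset.mem_filter.1 hp
    by_cases he : p.1 = p.2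
    · rw [if_pos he, ← he, cnt2_self]
    · rw [if_neg he, cnt2_zero _ _ he hnd]
  rw [Finset.sum_congr rfl h1]
  have h2 : ∑ p ∈ (F ×ˢ F).filter (fun p => Disjoint p.1 p.2),
      (if p.1 = p.2 then cnt1 p.1 else 0) = 0 := by
    apply Finset.sum_eq_zero
    intro p hp
    obtain ⟨hpF, hd⟩ := Finset.mem_filter.1 hp
    rw [if_neg]
    intro he
    have h2card : p.1.card = 2 := hF2 p.1 (Finset.mem_product.1 hpF).1
    rw [he] at hd h2card
    rw [disjoint_self] at hd
    rw [hd] at h2card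
    simp at h2card
  have h3 : ∑ p ∈ (F ×ˢ F).filter (fun p => ¬Disjoint p.1 p.2),
        (if p.1 = p.2 then cnt1 p.1 else 0)
      = ∑ p ∈ F ×ˢ F, (if p.1 = p.2 then cnt1 p.1 else 0) := by
    rw [← Finset.sum_filter_add_sum_filter_not (F ×ˢ F) (fun p => Disjoint p.1 p.2)
      (fun p => if p.1 = p.2 then cnt1 p.1 else 0), h2, zero_add]
  rw [h3, Finset.sum_product]
  apply Finset.sum_congr rfl
  intro e he
  dsimp only
  rw [Finset.sum_ite_eq F e (fun _ => cnt1 e), if_pos he]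

private lemma handshake (F : Finset (Finset V)) (hF2 : ∀ e ∈ F, e.card = 2) :
    ∑ v : V, (F.filter (fun e => v ∈ e)).card = 2 * F.card := by
  classical
  have h : ∀ v : V, (F.filter (fun e => v ∈ e)).card = ∑ e ∈ F, if v ∈ e then 1 else 0 :=
    fun v => Finset.card_filter _ _
  simp_rw [h]
  rw [Finset.sum_comm]
  have h2 : ∀ e ∈ F, (∑ v : V, if v ∈ e then 1 else 0) = 2 := by
    intro e he
    rw [← card_inter_eq_sum, hF2 e he]
  rw [Finset.sum_congr rfl h2, Finset.sum_const, smul_eq_mul, mul_comm]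

private lemma deg_le (F : Finset (Finset V)) (hF2 : ∀ e ∈ F, e.card = 2) (v : V) :
    (F.filter (fun e => v ∈ e)).card ≤ Fintype.card V - 1 := by
  classical
  rw [← card_Ev v]
  apply Finset.card_le_card
  intro e he
  obtain ⟨heF, hv⟩ := Finset.mem_filter.1 he
  exact Finset.mem_filter.2 ⟨Finset.mem_univ e, hF2 e heF, hv⟩

private lemma K_bound (F : Finset (Finset V)) (hF2 : ∀ e ∈ F, e.card = 2) :
    ((F ×ˢ F).filter (fun p => Disjoint p.1 p.2)).card
      + ∑ v : V, ((F.filter (fun e => v ∈ e)).card) ^ 2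
      ≤ F.card ^ 2 + F.card := by
  classical
  have h1 : ∑ v : V, ((F.filter (fun e => v ∈ e)).card) ^ 2
      = ∑ p ∈ F ×ˢ F, (p.1 ∩ p.2).card := by
    have h : ∀ v : V, ((F.filter (fun e => v ∈ e)).card) ^ 2
        = ∑ e ∈ F, ∑ f ∈ F, if v ∈ e ∧ v ∈ f then 1 else 0 := by
      intro v
      rw [Finset.card_filter, sq, Finset.sum_mul_sum]
      apply Finset.sum_congr rfl; intro e _
      apply Finset.sum_congr rfl; intro f _
      by_cases hh1 : v ∈ e <;> by_cases hh2 : v ∈ f <;> simp [hh1, hh2]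
    have h' : ∀ p : Finset V × Finset V,
        (p.1 ∩ p.2).card = ∑ v : V, if v ∈ p.1 ∧ v ∈ p.2 then 1 else 0 := by
      intro p
      rw [card_inter_eq_sum]
      apply Finset.sum_congr rfl; intro v _
      simp [Finset.mem_inter]
    simp_rw [h, h']
    rw [Finset.sum_product]
    dsimp only
    rw [Finset.sum_comm]
    apply Finset.sum_congr rfl
    intro e _
    rw [Finset.sum_comm]
  have hK : ((F ×ˢ F).filter (fun p => Disjoint p.1 p.2)).card
      = ∑ p ∈ F ×ˢ F, if Disjoint p.1 p.2 then 1 else 0 := Finset.card_filter _ _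
  rw [hK, h1, ← Finset.sum_add_distrib]
  have hle : ∀ p ∈ F ×ˢ F, ((if Disjoint p.1 p.2 then 1 else 0) + (p.1 ∩ p.2).card)
      ≤ 1 + (if p.1 = p.2 then 1 else 0) := by
    intro p hp
    obtain ⟨hp1, hp2⟩ := Finset.mem_product.1 hp
    have hc1 := hF2 _ hp1
    have hc2 := hF2 _ hp2
    by_cases he : p.1 = p.2
    · rw [if_pos he]
      have hnd : ¬ Disjoint p.1 p.2 := by
        rw [he, disjoint_self]
        intro h0
        rw [h0] at hc2
        simp at hc2
      rw [if_neg hnd, he, Finset.inter_self, hc2]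
    · rw [if_neg he]
      by_cases hd : Disjoint p.1 p.2
      · rw [if_pos hd, Finset.disjoint_iff_inter_eq_empty.1 hd]
        simp
      · rw [if_neg hd]
        have hlt : (p.1 ∩ p.2).card ≤ 1 := by
          by_contra hcon
          push_neg at hcon
          have hsub : p.1 ∩ p.2 ⊆ p.1 := Finset.inter_subset_left
          have heq : p.1 ∩ p.2 = p.1 := Finset.eq_of_subset_of_card_le hsub (by omega)
          have hsub2 : p.1 ⊆ p.2 := by
            rw [← heq]; exact Finset.inter_subset_right
          exact he (Finset.eq_of_subset_of_card_le hsub2 (by omega))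
        omega
  calc ∑ p ∈ F ×ˢ F, ((if Disjoint p.1 p.2 then 1 else 0) + (p.1 ∩ p.2).card)
      ≤ ∑ p ∈ F ×ˢ F, (1 + if p.1 = p.2 then 1 else 0) := Finset.sum_le_sum hle
    _ = F.card ^ 2 + F.card := by
        rw [Finset.sum_add_distrib, Finset.sum_const, Finset.card_product, smul_eq_mul,
          mul_one, sq]
        congr 1
        rw [Finset.sum_product]
        have hone : ∀ e ∈ F, (∑ f ∈ F, if (e, f).1 = (e, f).2 then 1 else 0) = 1 := by
          intro e he
          dsimp only
          rw [Finset.sum_ite_eq F e (fun _ => 1), if_pos he]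
        rw [Finset.sum_congr rfl hone, Finset.sum_const, smul_eq_mul, mul_one]

private lemma key_ineq (n m K : ℝ) (hn : 4 ≤ n) (hm0 : 0 ≤ m) (hK0 : 0 ≤ K)
    (hm : 2*m ≤ n*(n-1)) (hKn : K*n ≤ (m^2+m)*n - 4*m^2) :
    m*(n-1)*(n-3) + K*(n-1) - m^2*(n-3) ≤ n*(n-1)^2*(n-3) := by
  nlinarith [sq_nonneg (n*(n-1) - 4*m), sq_nonneg (n*(n-1)), sq_nonneg m, sq_nonneg n,
    mul_nonneg hm0 hm0, hn, hm, hKn, hK0,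
    mul_nonneg (by linarith : (0:ℝ) ≤ n - 1) (by linarith : (0:ℝ) ≤ (m^2+m)*n - 4*m^2 - K*n),
    mul_nonneg (by linarith : (0:ℝ) ≤ n - 2) (sq_nonneg (n*(n-1) - 4*m)),
    mul_nonneg (by linarith : (0:ℝ) ≤ 7*n - 22) (sq_nonneg (n*(n-1)))]

private lemma var_bound (hn : 4 ≤ Fintype.card V) (F : Finset (Finset V))
    (hF2 : ∀ e ∈ F, e.card = 2) :
    ∑ M ∈ PP V, (((F ∩ M).card : ℝ) - (F.card : ℝ) / ((Fintype.card V : ℝ) - 1)) ^ 2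
      ≤ ((PP V).card : ℝ) * (Fintype.card V : ℝ) := by
  classical
  set nn := Fintype.card V with hnn
  have h1n : (1:ℕ) ≤ nn := by omega
  have h3n : (3:ℕ) ≤ nn := by omega
  set n : ℝ := (nn : ℝ) with hnR
  have hn4 : (4:ℝ) ≤ n := by rw [hnR]; exact_mod_cast hn
  have hn1 : (0:ℝ) < n - 1 := by linarith
  have hn3 : (0:ℝ) < n - 3 := by linarith
  set m : ℝ := (F.card : ℝ) with hmR
  set N : ℝ := ((PP V).card : ℝ) with hNR
  set μ : ℝ := m / (n - 1) with hmu
  have hμ : μ * (n - 1) = m := div_mul_cancel₀ m (ne_of_gt hn1)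
  set S1 : ℝ := ∑ M ∈ PP V, ((F ∩ M).card : ℝ) with hS1
  set S2 : ℝ := ∑ M ∈ PP V, ((F ∩ M).card : ℝ)^2 with hS2
  set K : ℝ := (((F ×ˢ F).filter (fun p => Disjoint p.1 p.2)).card : ℝ) with hKR
  -- natural number identities, cast to ℝ
  have hA : (∑ M ∈ PP V, (F ∩ M).card) * (nn - 1) = F.card * (PP V).card := by
    rw [sumS, Finset.sum_mul]
    have : ∀ e ∈ F, cnt1 e * (nn - 1) = (PP V).card := fun e he => cnt1_mul hn e (hF2 e he)
    rw [Finset.sum_congr rfl this, Finset.sum_const, smul_eq_mul]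
  have rA : S1 * (n - 1) = m * N := by
    have := congrArg (fun k : ℕ => (k : ℝ)) hA
    simp only [Nat.cast_mul, Nat.cast_sub h1n, Nat.cast_sum, Nat.cast_one] at this
    exact this
  have hB : (∑ M ∈ PP V, (F ∩ M).card ^ 2) * ((nn - 1) * (nn - 3))
      = F.card * (PP V).card * (nn - 3)
        + ((F ×ˢ F).filter (fun p => Disjoint p.1 p.2)).card * (PP V).card := by
    rw [sumS2, sumS2_split F hF2, add_mul]
    congr 1
    · rw [Finset.sum_mul]
      have : ∀ e ∈ F, cnt1 e * ((nn - 1) * (nn - 3)) = (PP V).card * (nn - 3) := by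
        intro e he
        rw [← mul_assoc, cnt1_mul hn e (hF2 e he)]
      rw [Finset.sum_congr rfl this, Finset.sum_const, smul_eq_mul, mul_assoc]
    · rw [Finset.sum_mul]
      have : ∀ p ∈ (F ×ˢ F).filter (fun p => Disjoint p.1 p.2),
          cnt2 p.1 p.2 * ((nn - 1) * (nn - 3)) = (PP V).card := by
        intro p hp
        obtain ⟨hpF, hd⟩ := Finset.mem_filter.1 hp
        obtain ⟨hp1, hp2⟩ := Finset.mem_product.1 hpF
        rw [mul_comm (nn-1) (nn-3), ← mul_assoc,
          cnt2_mul p.1 p.2 (hF2 _ hp1) (hF2 _ hp2) hd.symm,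
          cnt1_mul hn p.1 (hF2 _ hp1)]
      rw [Finset.sum_congr rfl this, Finset.sum_const, smul_eq_mul]
  have rB : S2 * ((n - 1) * (n - 3)) = m * N * (n - 3) + K * N := by
    have := congrArg (fun k : ℕ => (k : ℝ)) hB
    simp only [Nat.cast_mul, Nat.cast_add, Nat.cast_sub h1n, Nat.cast_sub h3n, Nat.cast_sum,
      Nat.cast_pow, Nat.cast_one, Nat.cast_ofNat] at this
    exact this
  -- degree facts
  have rK : K + ∑ v : V, ((F.filter (fun e => v ∈ e)).card : ℝ)^2 ≤ m^2 + m := by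
    have := K_bound F hF2
    have hcast : (↑(((F ×ˢ F).filter (fun p => Disjoint p.1 p.2)).card
        + ∑ v : V, ((F.filter (fun e => v ∈ e)).card) ^ 2) : ℝ)
        ≤ ((F.card ^ 2 + F.card : ℕ) : ℝ) := by exact_mod_cast this
    push_cast at hcast
    exact hcast
  have rHS : ∑ v : V, ((F.filter (fun e => v ∈ e)).card : ℝ) = 2 * m := by
    have := handshake F hF2
    have hcast := congrArg (fun k : ℕ => (k : ℝ)) this
    push_cast at hcast
    exact hcast
  have rC : (2*m)^2 ≤ n * ∑ v : V, ((F.filter (fun e => v ∈ e)).card : ℝ)^2 := by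
    have := sq_sum_le_card_mul_sum_sq
      (s := (Finset.univ : Finset V)) (f := fun v => ((F.filter (fun e => v ∈ e)).card : ℝ))
    rw [rHS] at this
    simpa [Finset.card_univ] using this
  have rm : 2*m ≤ n*(n-1) := by
    have hsum : ∑ v : V, (F.filter (fun e => v ∈ e)).card ≤ Fintype.card V * (nn - 1) := by
      calc ∑ v : V, (F.filter (fun e => v ∈ e)).card
          ≤ ∑ _v : V, (nn - 1) := Finset.sum_le_sum (fun v _ => deg_le F hF2 v)
        _ = Fintype.card V * (nn - 1) := by rw [Finset.sum_const, smul_eq_mul, Finset.card_univ]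
    rw [handshake F hF2] at hsum
    have hcast : ((2 * F.card : ℕ) : ℝ) ≤ ((Fintype.card V * (nn - 1) : ℕ) : ℝ) := by
      exact_mod_cast hsum
    rw [Nat.cast_mul, Nat.cast_mul, Nat.cast_sub h1n] at hcast
    push_cast at hcast
    exact hcast
  have hK0 : 0 ≤ K := by positivity
  have hm0 : 0 ≤ m := by positivity
  have hN0 : 0 ≤ N := by positivity
  have hKn : K*n ≤ (m^2+m)*n - 4*m^2 := by
    nlinarith [rK, rC, mul_le_mul_of_nonneg_right
      (by linarith [rK] : K ≤ m^2 + m - ∑ v : V, ((F.filter (fun e => v ∈ e)).card : ℝ)^2)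
      (by linarith : (0:ℝ) ≤ n)]
  -- expand the variance sum
  have hT : (∑ M ∈ PP V, (((F ∩ M).card : ℝ) - μ)^2) = S2 - 2*μ*S1 + N*μ^2 := by
    have expand : ∀ M ∈ PP V, (((F ∩ M).card : ℝ) - μ)^2
        = ((F ∩ M).card : ℝ)^2 - 2*μ*((F ∩ M).card : ℝ) + μ^2 := fun _ _ => by ring
    rw [Finset.sum_congr rfl expand, Finset.sum_add_distrib, Finset.sum_sub_distrib,
      ← Finset.mul_sum, Finset.sum_const, nsmul_eq_mul]
  have hpos : (0:ℝ) < (n-1)^2*(n-3) := by positivity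
  have hTval : (∑ M ∈ PP V, (((F ∩ M).card : ℝ) - μ)^2) * ((n-1)^2*(n-3))
      = (m*N*(n-3) + K*N)*(n-1) - 2*(m*N)*m*(n-3) + N*m^2*(n-3) := by
    have hstep : (∑ M ∈ PP V, (((F ∩ M).card : ℝ) - μ)^2) * ((n-1)^2*(n-3))
        = (S2*((n-1)*(n-3)))*(n-1) - 2*(S1*(n-1))*(μ*(n-1))*(n-3)
          + N*(μ*(n-1))^2*(n-3) := by
      rw [hT]; ring
    rw [hstep, hμ, rA, rB]
  have hkey := key_ineq n m K hn4 hm0 hK0 rm hKn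
  have hfinal : (∑ M ∈ PP V, (((F ∩ M).card : ℝ) - μ)^2) * ((n-1)^2*(n-3))
      ≤ (N * n) * ((n-1)^2*(n-3)) := by
    rw [hTval]
    have : (m*N*(n-3) + K*N)*(n-1) - 2*(m*N)*m*(n-3) + N*m^2*(n-3)
        = N * (m*(n-1)*(n-3) + K*(n-1) - m^2*(n-3)) := by ring
    rw [this]
    calc N * (m*(n-1)*(n-3) + K*(n-1) - m^2*(n-3))
        ≤ N * (n*(n-1)^2*(n-3)) := mul_le_mul_of_nonneg_left hkey hN0
      _ = (N * n) * ((n-1)^2*(n-3)) := by ring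
  exact le_of_mul_le_mul_right hfinal hpos

end Aux


/-- Let `X` be a finite set of even cardinality `|X| ≥ 4`, let `M` be a uniformly
random partition of `X` into pairs, and let `F` be any family of two-element subsets of
`X`.  For every `λ > 0`, the probability that `| |F ∩ M| - |F|/(|X|-1) | ≥ λ` is at
most `|X|/λ²`. -/
theorem stmt_11 {V : Type*} [Fintype V] [DecidableEq V]
    [MeasurableSpace (Finset (Finset V))] [MeasurableSingletonClass (Finset (Finset V))]
    (hcard : 4 ≤ Fintype.card V) (heven : Even (Fintype.card V))
    (F : Finset (Finset V)) (hF2 : ∀ e ∈ F, e.card = 2)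
    (lam : ℝ) (hlam : 0 < lam) :
    (uniformOn {M : Finset (Finset V) | IsPerfectPairing M})
        {M : Finset (Finset V) |
          lam ≤ |((F ∩ M).card : ℝ) - (F.card : ℝ) / (Fintype.card V - 1)|}
      ≤ ENNReal.ofReal ((Fintype.card V : ℝ) / lam ^ 2) := by
  classical
  set μ : ℝ := (F.card : ℝ) / ((Fintype.card V : ℝ) - 1) with hμdef
  set bad : Finset (Finset (Finset V)) :=
    (PP V).filter (fun M => lam ≤ |((F ∩ M).card : ℝ) - μ|) with hbad
  -- Chebyshev inequality on the counting level
  have hcheb : (bad.card : ℝ) * lam^2 ≤ ((PP V).card : ℝ) * (Fintype.card V : ℝ) := by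
    have h1 : (bad.card : ℝ) * lam^2 = ∑ _M ∈ bad, lam^2 := by
      rw [Finset.sum_const, nsmul_eq_mul]
    have h2 : ∑ M ∈ bad, lam^2 ≤ ∑ M ∈ bad, (((F ∩ M).card : ℝ) - μ)^2 := by
      apply Finset.sum_le_sum
      intro M hM
      have habs : lam ≤ |((F ∩ M).card : ℝ) - μ| := (Finset.mem_filter.1 hM).2
      calc lam^2 ≤ |((F ∩ M).card : ℝ) - μ|^2 := by
            exact pow_le_pow_left₀ hlam.le habs 2
        _ = (((F ∩ M).card : ℝ) - μ)^2 := sq_abs _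
    have h3 : ∑ M ∈ bad, (((F ∩ M).card : ℝ) - μ)^2
        ≤ ∑ M ∈ PP V, (((F ∩ M).card : ℝ) - μ)^2 :=
      Finset.sum_le_sum_of_subset_of_nonneg (Finset.filter_subset _ _)
        (fun M _ _ => sq_nonneg _)
    have h4 := var_bound hcard F hF2
    rw [← hμdef] at h4
    linarith
  -- rewrite the measure as a ratio of counts
  have hSfin : ({M : Finset (Finset V) | IsPerfectPairing M} : Set (Finset (Finset V))).Finite :=
    Set.toFinite _
  have hmeas : MeasurableSet {M : Finset (Finset V) | IsPerfectPairing M} :=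
    hSfin.measurableSet
  rw [uniformOn, cond_apply hmeas]
  have hcount1 : MeasureTheory.Measure.count {M : Finset (Finset V) | IsPerfectPairing M}
      = ((PP V).card : ENNReal) := by
    rw [MeasureTheory.Measure.count_apply_finite _ hSfin]
    norm_cast
    congr 1
    ext M
    simp [Set.Finite.mem_toFinset, PP]
  have hIfin : (({M : Finset (Finset V) | IsPerfectPairing M} ∩
      {M : Finset (Finset V) | lam ≤ |((F ∩ M).card : ℝ) - μ|}) :
      Set (Finset (Finset V))).Finite := Set.toFinite _
  have hcount2 : MeasureTheory.Measure.count ({M : Finset (Finset V) | IsPerfectPairing M} ∩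
      {M : Finset (Finset V) | lam ≤ |((F ∩ M).card : ℝ) - μ|})
      = (bad.card : ENNReal) := by
    rw [MeasureTheory.Measure.count_apply_finite _ hIfin]
    norm_cast
    congr 1
    ext M
    simp only [Set.Finite.mem_toFinset, Set.mem_inter_iff, Set.mem_setOf_eq, hbad,
      Finset.mem_filter, PP, Finset.mem_univ, true_and]
  rw [hcount1, hcount2]
  by_cases hN : (PP V).card = 0
  · have hPP : PP V = ∅ := Finset.card_eq_zero.1 hN
    have hb0 : bad.card = 0 := by rw [hbad, hPP]; simp
    rw [hb0]
    simp
  · have hNne : ((PP V).card : ENNReal) ≠ 0 := by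
      simpa using hN
    have hNtop : ((PP V).card : ENNReal) ≠ ⊤ := ENNReal.natCast_ne_top _
    have hreal : (bad.card : ℝ) ≤ ((Fintype.card V : ℝ)/lam^2) * ((PP V).card : ℝ) := by
      rw [div_mul_eq_mul_div, le_div_iff₀ (by positivity)]
      calc (bad.card : ℝ) * lam^2 ≤ ((PP V).card : ℝ) * (Fintype.card V : ℝ) := hcheb
        _ = (Fintype.card V : ℝ) * ((PP V).card : ℝ) := mul_comm _ _
    have hEN : (bad.card : ENNReal)
        ≤ ENNReal.ofReal ((Fintype.card V : ℝ)/lam^2) * ((PP V).card : ENNReal) := by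
      have h1 : (bad.card : ENNReal) = ENNReal.ofReal (bad.card : ℝ) := by
        simp
      have h2 : ((PP V).card : ENNReal) = ENNReal.ofReal ((PP V).card : ℝ) := by
        simp
      rw [h1, h2, ← ENNReal.ofReal_mul (by positivity)]
      exact ENNReal.ofReal_le_ofReal hreal
    calc ((PP V).card : ENNReal)⁻¹ * (bad.card : ENNReal)
        ≤ ((PP V).card : ENNReal)⁻¹
          * (ENNReal.ofReal ((Fintype.card V : ℝ)/lam^2) * ((PP V).card : ENNReal)) :=
        mul_le_mul_right hEN _
      _ = ENNReal.ofReal ((Fintype.card V : ℝ)/lam^2)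
          * (((PP V).card : ENNReal)⁻¹ * ((PP V).card : ENNReal)) := by ring
      _ = ENNReal.ofReal ((Fintype.card V : ℝ)/lam^2) := by
        rw [ENNReal.inv_mul_cancel hNne hNtop, mul_one]
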